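/- Let ε, c, z, ψ be as above with Im(z²) < 0, ψ(0)=0, ψ'(0)=1. Define g(s) = 2·Im(ψ'(s)·conj(ψ(s))). Then g(0) = 0 and g'(s) = -2·c⁻²·ε(s)·|ψ(s)|²·Im(z²) ≥ 0, with strict inequality whenever ψ(s) ≠ 0; consequently g(s) > 0 for all s ∈ (0,l]. -/

import Mathlib

open Set Complex

/-- For `g(s) = 2·Im(ψ'(s)·conj ψ(s))`: `g(0) = 0`,
`g'(s) = -2 c⁻² ε(s) |ψ(s)|² Im(z²) ≥ 0`, strictly when `ψ(s) ≠ 0`, and `g > 0` on `(0,l]`. -/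
theorem g_properties
    (l c : ℝ) (hl : 0 < l) (hc : 0 < c)
    (ε : ℝ → ℝ) (hmeas : Measurable ε) (hε : ∀ s, 1 ≤ ε s)
    (z : ℂ) (hz : (z ^ 2).im < 0)
    (ψ ψ' : ℝ → ℂ)
    (hψ : ∀ s ∈ Icc (0 : ℝ) l, HasDerivAt ψ (ψ' s) s)
    (hψ' : ∀ s ∈ Icc (0 : ℝ) l,
      HasDerivAt ψ' (-(z ^ 2 / (c : ℂ) ^ 2) * (ε s : ℂ) * ψ s) s)
    (h0 : ψ 0 = 0) (h1 : ψ' 0 = 1)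
    (g : ℝ → ℝ) (hg : ∀ s, g s = 2 * (ψ' s * (starRingEnd ℂ) (ψ s)).im) :
    g 0 = 0 ∧
    (∀ s ∈ Icc (0 : ℝ) l,
      HasDerivAt g (-2 * c⁻¹ ^ 2 * ε s * ‖ψ s‖ ^ 2 * (z ^ 2).im) s ∧
      0 ≤ -2 * c⁻¹ ^ 2 * ε s * ‖ψ s‖ ^ 2 * (z ^ 2).im ∧
      (ψ s ≠ 0 → 0 < -2 * c⁻¹ ^ 2 * ε s * ‖ψ s‖ ^ 2 * (z ^ 2).im)) ∧
    (∀ s ∈ Ioc (0 : ℝ) l, 0 < g s) := by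
  have hg0 : g 0 = 0 := by simp [hg, h0]
  have hc2 : (0 : ℝ) < c⁻¹ ^ 2 := by positivity
  have him : (0 : ℝ) < -(z ^ 2).im := by linarith
  -- derivative of g
  have hderiv : ∀ s ∈ Icc (0 : ℝ) l,
      HasDerivAt g (-2 * c⁻¹ ^ 2 * ε s * ‖ψ s‖ ^ 2 * (z ^ 2).im) s := by
    intro s hs
    have hF : HasDerivAt (fun t => ψ' t * (starRingEnd ℂ) (ψ t))
        (-(z ^ 2 / (c : ℂ) ^ 2) * (ε s : ℂ) * ψ s * (starRingEnd ℂ) (ψ s)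
          + ψ' s * (starRingEnd ℂ) (ψ' s)) s :=
      (hψ' s hs).mul (hψ s hs).star
    have hIm : HasDerivAt (fun t => 2 * (ψ' t * (starRingEnd ℂ) (ψ t)).im)
        (2 * (-(z ^ 2 / (c : ℂ) ^ 2) * (ε s : ℂ) * ψ s * (starRingEnd ℂ) (ψ s)
          + ψ' s * (starRingEnd ℂ) (ψ' s)).im) s :=
      (Complex.imCLM.hasFDerivAt.comp_hasDerivAt s hF).const_mul 2
    have hEq : 2 * (-(z ^ 2 / (c : ℂ) ^ 2) * (ε s : ℂ) * ψ s * (starRingEnd ℂ) (ψ s)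
          + ψ' s * (starRingEnd ℂ) (ψ' s)).im
        = -2 * c⁻¹ ^ 2 * ε s * ‖ψ s‖ ^ 2 * (z ^ 2).im := by
      have h1 : ψ s * (starRingEnd ℂ) (ψ s) = ((‖ψ s‖ ^ 2 : ℝ) : ℂ) := by
        rw [Complex.mul_conj, Complex.normSq_eq_norm_sq]
      have h2 : (ψ' s * (starRingEnd ℂ) (ψ' s)).im = 0 := by
        rw [Complex.mul_conj]; simp
      have hmul : -(z ^ 2 / (c : ℂ) ^ 2) * (ε s : ℂ) * ψ s * (starRingEnd ℂ) (ψ s)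
          = -(z ^ 2 / (c : ℂ) ^ 2) * ((ε s * ‖ψ s‖ ^ 2 : ℝ) : ℂ) := by
        rw [mul_assoc, h1]; push_cast; ring
      rw [Complex.add_im, h2, add_zero, hmul]
      have h4 : (-(z ^ 2 / (c : ℂ) ^ 2) * ((ε s * ‖ψ s‖ ^ 2 : ℝ) : ℂ)).im
          = -(z ^ 2 / (c : ℂ) ^ 2).im * (ε s * ‖ψ s‖ ^ 2) := by
        rw [Complex.mul_im, Complex.ofReal_im, Complex.ofReal_re, mul_zero, zero_add,
          Complex.neg_im]
      rw [h4]
      have h5 : (z ^ 2 / (c : ℂ) ^ 2).im = (z ^ 2).im / c ^ 2 := by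
        rw [Complex.div_im]
        simp [Complex.normSq, pow_two]
        field_simp
      rw [h5]
      field_simp
    have := hIm.congr_of_eventuallyEq (Filter.Eventually.of_forall (fun t => hg t))
    rwa [hEq] at this
  have key : ∀ s, 0 ≤ -2 * c⁻¹ ^ 2 * ε s * ‖ψ s‖ ^ 2 * (z ^ 2).im := by
    intro s
    have h : -2 * c⁻¹ ^ 2 * ε s * ‖ψ s‖ ^ 2 * (z ^ 2).im
        = (2 * c⁻¹ ^ 2 * ε s * ‖ψ s‖ ^ 2) * (-(z ^ 2).im) := by ring
    rw [h]
    have hε' : (0 : ℝ) < ε s := lt_of_lt_of_le one_pos (hε s)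
    have : (0 : ℝ) ≤ 2 * c⁻¹ ^ 2 * ε s * ‖ψ s‖ ^ 2 := by positivity
    exact mul_nonneg this him.le
  have keypos : ∀ s, ψ s ≠ 0 → 0 < -2 * c⁻¹ ^ 2 * ε s * ‖ψ s‖ ^ 2 * (z ^ 2).im := by
    intro s hne
    have h : -2 * c⁻¹ ^ 2 * ε s * ‖ψ s‖ ^ 2 * (z ^ 2).im
        = (2 * c⁻¹ ^ 2 * ε s * ‖ψ s‖ ^ 2) * (-(z ^ 2).im) := by ring
    rw [h]
    have hε' : (0 : ℝ) < ε s := lt_of_lt_of_le one_pos (hε s)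
    have habs : (0 : ℝ) < ‖ψ s‖ := norm_pos_iff.mpr hne
    have : (0 : ℝ) < 2 * c⁻¹ ^ 2 * ε s * ‖ψ s‖ ^ 2 := by positivity
    exact mul_pos this him
  refine ⟨hg0, fun s hs => ⟨hderiv s hs, key s, keypos s⟩, ?_⟩
  -- g is monotone on [0,l]
  have hmono : MonotoneOn g (Icc 0 l) := by
    apply monotoneOn_of_deriv_nonneg (convex_Icc 0 l)
    · exact fun s hs => (hderiv s hs).continuousAt.continuousWithinAt
    · intro s hs
      rw [interior_Icc] at hs
      exact ((hderiv s (Ioo_subset_Icc_self hs)).differentiableAt).differentiableWithinAt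
    · intro s hs
      rw [interior_Icc] at hs
      rw [(hderiv s (Ioo_subset_Icc_self hs)).deriv]
      exact key s
  intro s hs
  by_contra hgs
  push_neg at hgs
  have hsIcc : s ∈ Icc (0 : ℝ) l := ⟨hs.1.le, hs.2⟩
  have hgs0 : g s = 0 :=
    le_antisymm hgs (hg0 ▸ hmono (left_mem_Icc.2 hl.le) hsIcc hs.1.le)
  -- g vanishes on [0,s]
  have hzero : ∀ t ∈ Icc (0 : ℝ) s, g t = 0 := by
    intro t ht
    have htIcc : t ∈ Icc (0 : ℝ) l := ⟨ht.1, ht.2.trans hs.2⟩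
    have h1' : g 0 ≤ g t := hmono (left_mem_Icc.2 hl.le) htIcc ht.1
    have h2' : g t ≤ g s := hmono htIcc hsIcc ht.2
    rw [hg0] at h1'; rw [hgs0] at h2'
    linarith
  -- hence ψ = 0 on (0,s)
  have hψzero : ∀ t ∈ Ioo (0 : ℝ) s, ψ t = 0 := by
    intro t ht
    have htIcc : t ∈ Icc (0 : ℝ) l := ⟨ht.1.le, ht.2.le.trans hs.2⟩
    have hconst : HasDerivAt g 0 t := by
      have hmem : Ioo (0 : ℝ) s ∈ nhds t := isOpen_Ioo.mem_nhds ht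
      exact (hasDerivAt_const t (0 : ℝ)).congr_of_eventuallyEq
        (Filter.eventually_of_mem hmem fun x hx => hzero x (Ioo_subset_Icc_self hx))
    have huniq : -2 * c⁻¹ ^ 2 * ε t * ‖ψ t‖ ^ 2 * (z ^ 2).im = 0 :=
      (hderiv t htIcc).unique hconst
    by_contra hne
    exact absurd huniq (ne_of_gt (keypos t hne))
  -- then ψ' 0 = 0, contradicting ψ' 0 = 1
  have hd0 : HasDerivWithinAt ψ (ψ' 0) (Ioi 0) 0 :=
    (hψ 0 (left_mem_Icc.2 hl.le)).hasDerivWithinAt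
  have hdc : HasDerivWithinAt ψ 0 (Ioi 0) 0 := by
    have hmem : Ioo (0 : ℝ) s ∈ nhdsWithin (0 : ℝ) (Ioi 0) := by
      rw [mem_nhdsGT_iff_exists_Ioo_subset]
      exact ⟨s, hs.1, fun x hx => hx⟩
    exact (hasDerivWithinAt_const 0 (Ioi 0) (0 : ℂ)).congr_of_eventuallyEq
      (Filter.eventually_of_mem hmem fun x hx => hψzero x hx) (by simp [h0])
  have : ψ' 0 = 0 := by
    have e1 := hd0.derivWithin (uniqueDiffWithinAt_Ioi (0 : ℝ))
    have e2 := hdc.derivWithin (uniqueDiffWithinAt_Ioi (0 : ℝ))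
    rw [← e1, ← e2]
  rw [h1] at this
  exact one_ne_zero this
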